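/- arXiv:2509.17799 — 3 statements merged into one kernel-verified Lean document; each statement's English description precedes it below -/
import Mathlib

section
/- Let M be a finite set of m real n×n matrices. Then the stabilizability radius satisfies ρ̃(M) ≥ ρ̌(M)/m, where ρ̌ is the joint spectral subradius. -/
open MeasureTheory Filter Set
open scoped ENNReal NNReal


attribute [local instance] Matrix.frobeniusNormedAddCommGroup

/-- Trajectory of the switched system `x(t+1) = M σ(t+1) x(t)`. -/
noncomputable def trajSS {n m : ℕ} (M : Fin m → Matrix (Fin n) (Fin n) ℝ)
    (σ : ℕ → Fin m) (x : EuclideanSpace ℝ (Fin n)) : ℕ → EuclideanSpace ℝ (Fin n)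
  | 0 => x
  | t + 1 => Matrix.toEuclideanLin (M (σ (t + 1))) (trajSS M σ x t)

/-- The joint spectral subradius `ρ̌(M) = lim_T inf { ‖A‖^(1/T) : A a product of T matrices }`. -/
noncomputable def subradiusSS {n m : ℕ} (M : Fin m → Matrix (Fin n) (Fin n) ℝ) : ℝ :=
  Filter.atTop.liminf fun T : ℕ =>
    sInf {x : ℝ | ∃ w : List (Fin m), w.length = T ∧ x = ‖(w.map M).prod‖ ^ ((1 : ℝ) / T)}

/-- The stabilizability radius
`ρ̃(M) = sup_{x₀} inf { λ ≥ 0 : ∃ σ, c > 0, ‖x_σ(t)‖ ≤ c λᵗ ‖x₀‖ ∀ t }`. -/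
noncomputable def stabRadiusSS {n m : ℕ} (M : Fin m → Matrix (Fin n) (Fin n) ℝ) : ℝ :=
  ⨆ x₀ : EuclideanSpace ℝ (Fin n),
    sInf {l : ℝ | 0 ≤ l ∧ ∃ σ : ℕ → Fin m, ∃ c : ℝ, 0 < c ∧
      ∀ t : ℕ, ‖trajSS M σ x₀ t‖ ≤ c * l ^ t * ‖x₀‖}


noncomputable def mu0 : Measure ℝ := volume.restrict (Set.Icc (0:ℝ) 1)

instance : IsProbabilityMeasure mu0 := ⟨by simp [mu0, Real.volume_Icc]⟩

noncomputable def nuP (n : ℕ) : Measure (Fin n → ℝ) := Measure.pi fun _ => mu0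

instance (n : ℕ) : IsProbabilityMeasure (nuP n) := by
  unfold nuP; infer_instance

/-- One-dimensional slab measure. -/
lemma slab_1d (a b r : ℝ) (ha : a ≠ 0) :
    mu0 {z : ℝ | |a * z + b| ≤ r} ≤ ENNReal.ofReal (2 * r / |a|) := by
  have hap : (0:ℝ) < |a| := abs_pos.mpr ha
  have hset : {z : ℝ | |a * z + b| ≤ r} = Metric.closedBall (-b / a) (r / |a|) := by
    ext z
    rw [Metric.mem_closedBall, Real.dist_eq, Set.mem_setOf_eq, le_div_iff₀ hap,
      ← abs_mul]
    have : (z - -b / a) * a = a * z + b := by field_simp; ring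
    rw [this]
  calc mu0 {z : ℝ | |a * z + b| ≤ r} ≤ volume {z : ℝ | |a * z + b| ≤ r} :=
        Measure.restrict_le_self _
    _ = ENNReal.ofReal (2 * (r / |a|)) := by rw [hset, Real.volume_closedBall]
    _ = ENNReal.ofReal (2 * r / |a|) := by rw [mul_div_assoc]


/-- Core slab lemma in `ℝⁿ`. -/
lemma slab_core {N : ℕ} (v : Fin (N+1) → ℝ) (j : Fin (N+1)) (hj : v j ≠ 0) (r : ℝ) :
    nuP (N+1) {y | |∑ k, v k * y k| ≤ r} ≤ ENNReal.ofReal (2 * r / |v j|) := by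
  classical
  have hmp := MeasureTheory.measurePreserving_piFinSuccAbove
    (fun _ : Fin (N+1) => mu0) j
  set e := MeasurableEquiv.piFinSuccAbove (fun _ : Fin (N+1) => ℝ) j with he
  set S : Set (Fin (N+1) → ℝ) := {y | |∑ k, v k * y k| ≤ r} with hS
  have hSm : MeasurableSet S := by
    apply measurableSet_le _ measurable_const
    exact (Finset.measurable_sum _ fun k _ => by fun_prop).abs
  have key := (hmp.symm e).measure_preimage hSm.nullMeasurableSet
  show (Measure.pi fun _ : Fin (N+1) => mu0) S ≤ _
  rw [← key, Measure.prod_apply_symm (e.symm.measurable hSm)]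
  have slice_bound : ∀ y₂ : Fin N → ℝ,
      mu0 ((fun y₁ => (y₁, y₂)) ⁻¹' (e.symm ⁻¹' S)) ≤ ENNReal.ofReal (2 * r / |v j|) := by
    intro y₂
    set b : ℝ := ∑ k, v (j.succAbove k) * y₂ k with hb
    have hslice : ((fun y₁ => (y₁, y₂)) ⁻¹' (e.symm ⁻¹' S))
        = {z : ℝ | |v j * z + b| ≤ r} := by
      ext z
      simp only [Set.mem_preimage, hS, Set.mem_setOf_eq]
      have hz : e.symm (z, y₂) = Fin.insertNth (α := fun _ => ℝ) j z y₂ := rfl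
      rw [hz]
      have hsum : ∑ k, v k * (Fin.insertNth (α := fun _ => ℝ) j z y₂) k = v j * z + b := by
        rw [Fin.sum_univ_succAbove (fun k => v k * (Fin.insertNth (α := fun _ => ℝ) j z y₂) k) j]
        simp [hb]
      rw [hsum]
    rw [hslice]
    exact slab_1d (v j) b r hj
  calc ∫⁻ y₂, mu0 ((fun y₁ => (y₁, y₂)) ⁻¹' (e.symm ⁻¹' S))
        ∂(Measure.pi fun _ : Fin N => mu0)
      ≤ ∫⁻ _, ENNReal.ofReal (2 * r / |v j|) ∂(Measure.pi fun _ : Fin N => mu0) :=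
        lintegral_mono slice_bound
    _ = ENNReal.ofReal (2 * r / |v j|) := by
        rw [lintegral_const]
        simp

attribute [local instance] Matrix.frobeniusNormedAddCommGroup

/-- There is a dominating entry. -/
lemma exists_big_entry {n : ℕ} (hn : 0 < n) (A : Matrix (Fin n) (Fin n) ℝ) :
    ∃ i j, ‖A‖ ≤ n * |A i j| := by
  classical
  obtain ⟨q, -, hq⟩ := Finset.exists_max_image (Finset.univ : Finset (Fin n × Fin n))
    (fun q => |A q.1 q.2|) (by simp [Finset.univ_nonempty_iff, ← Fin.pos_iff_nonempty, hn])
  refine ⟨q.1, q.2, ?_⟩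
  set c := |A q.1 q.2| with hc
  have hc0 : 0 ≤ c := abs_nonneg _
  have hsum : ∑ i, ∑ j, ‖A i j‖ ^ (2:ℝ) ≤ (n * c) ^ 2 := by
    have : ∀ i j : Fin n, ‖A i j‖ ^ (2:ℝ) ≤ c ^ 2 := by
      intro i j
      rw [show ((2:ℝ)) = ((2:ℕ):ℝ) by norm_num, Real.rpow_natCast]
      have := hq (i, j) (Finset.mem_univ _)
      have habs : |A i j| ≤ c := this
      calc ‖A i j‖ ^ 2 = |A i j| ^ 2 := by rw [Real.norm_eq_abs]
        _ ≤ c ^ 2 := by nlinarith [abs_nonneg (A i j)]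
    calc ∑ i, ∑ j, ‖A i j‖ ^ (2:ℝ) ≤ ∑ _i : Fin n, ∑ _j : Fin n, c ^ 2 :=
          Finset.sum_le_sum fun i _ => Finset.sum_le_sum fun j _ => this i j
      _ = n * n * c ^ 2 := by simp [Finset.sum_const]; ring
      _ = (n * c) ^ 2 := by ring
  rw [Matrix.frobenius_norm_def, ← Real.sqrt_eq_rpow]
  calc Real.sqrt (∑ i, ∑ j, ‖A i j‖ ^ (2:ℝ)) ≤ Real.sqrt ((n * c)^2) :=
        Real.sqrt_le_sqrt hsum
    _ = n * c := Real.sqrt_sq (by positivity)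

/-- Slab bound for a nonzero matrix. -/
lemma slab_matrix {N : ℕ} (A : Matrix (Fin (N+1)) (Fin (N+1)) ℝ) (hA : A ≠ 0)
    {δ : ℝ} (hδ : 0 ≤ δ) :
    nuP (N+1) {y | ‖Matrix.toEuclideanLin A ((WithLp.equiv 2 (Fin (N+1) → ℝ)).symm y)‖ ≤ δ * ‖A‖}
      ≤ ENNReal.ofReal (2 * (N+1) * δ) := by
  obtain ⟨i, j, hij⟩ := exists_big_entry (Nat.succ_pos N) A
  have hApos : 0 < ‖A‖ := norm_pos_iff.mpr hA
  have hAij : 0 < |A i j| := by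
    by_contra h
    push_neg at h
    have : |A i j| = 0 := le_antisymm h (abs_nonneg _)
    rw [this] at hij
    simp only [mul_zero] at hij
    linarith
  have hsub : {y : Fin (N+1) → ℝ |
      ‖Matrix.toEuclideanLin A ((WithLp.equiv 2 (Fin (N+1) → ℝ)).symm y)‖ ≤ δ * ‖A‖}
      ⊆ {y | |∑ k, A i k * y k| ≤ δ * ‖A‖} := by
    intro y hy
    simp only [Set.mem_setOf_eq] at hy ⊢
    refine le_trans ?_ hy
    rw [WithLp.equiv_symm_apply, Matrix.toEuclideanLin_apply_piLp_toLp, EuclideanSpace.norm_eq]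
    have h1 : A.mulVec y i = ∑ k, A i k * y k := by
      simp [Matrix.mulVec, dotProduct]
    calc |∑ k, A i k * y k| = Real.sqrt ((A.mulVec y i)^2) := by
          rw [h1, Real.sqrt_sq_eq_abs]
      _ ≤ Real.sqrt (∑ k, ‖(WithLp.equiv 2 (Fin (N+1) → ℝ)).symm (A.mulVec y) k‖ ^ 2) := by
          apply Real.sqrt_le_sqrt
          have : ((A.mulVec y) i)^2 = ‖(WithLp.equiv 2 (Fin (N+1) → ℝ)).symm (A.mulVec y) i‖^2 := by
            rw [WithLp.equiv_symm_apply, PiLp.toLp_apply, Real.norm_eq_abs, sq_abs]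
          rw [this]
          exact Finset.single_le_sum (f := fun k =>
            ‖(WithLp.equiv 2 (Fin (N+1) → ℝ)).symm (A.mulVec y) k‖^2)
            (fun k _ => by positivity) (Finset.mem_univ i)
  calc nuP (N+1) {y | ‖Matrix.toEuclideanLin A ((WithLp.equiv 2 (Fin (N+1) → ℝ)).symm y)‖ ≤ δ * ‖A‖}
      ≤ nuP (N+1) {y | |∑ k, A i k * y k| ≤ δ * ‖A‖} := measure_mono hsub
    _ ≤ ENNReal.ofReal (2 * (δ * ‖A‖) / |A i j|) := slab_core (fun k => A i k) j (by
          intro h; simp only [h, abs_zero] at hAij; exact lt_irrefl 0 hAij) (δ * ‖A‖)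
    _ ≤ ENNReal.ofReal (2 * (N+1) * δ) := by
        apply ENNReal.ofReal_le_ofReal
        rw [div_le_iff₀ hAij]
        calc 2 * (δ * ‖A‖) ≤ 2 * (δ * ((N+1) * |A i j|)) := by
              apply mul_le_mul_of_nonneg_left _ (by norm_num)
              apply mul_le_mul_of_nonneg_left _ hδ
              exact_mod_cast hij
          _ = 2 * (N+1) * δ * |A i j| := by ring

lemma bad_null {N m : ℕ} (M : Fin m → Matrix (Fin (N+1)) (Fin (N+1)) ℝ) {c θ : ℝ}
    (hc : 0 ≤ c) (hθ : 0 ≤ θ) (hmθ : (m:ℝ) * θ < 1) :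
    nuP (N+1) {y | ∀ᶠ T in atTop, ∃ w : List (Fin m), w.length = T ∧ (w.map M).prod ≠ 0 ∧
      ‖Matrix.toEuclideanLin ((w.map M).prod) ((WithLp.equiv 2 (Fin (N+1) → ℝ)).symm y)‖
        ≤ c * θ^T * ‖(w.map M).prod‖} = 0 := by
  classical
  set E : ℕ → Set (Fin (N+1) → ℝ) := fun T =>
    {y | ∃ w : List (Fin m), w.length = T ∧ (w.map M).prod ≠ 0 ∧
      ‖Matrix.toEuclideanLin ((w.map M).prod) ((WithLp.equiv 2 (Fin (N+1) → ℝ)).symm y)‖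
        ≤ c * θ^T * ‖(w.map M).prod‖} with hE
  have hET : ∀ T : ℕ, nuP (N+1) (E T)
      ≤ ENNReal.ofReal (2*(N+1)*c * ((m:ℝ)*θ)^T) := by
    intro T
    set F : (Fin T → Fin m) → Set (Fin (N+1) → ℝ) := fun v =>
      {y | (((List.ofFn v).map M).prod) ≠ 0 ∧
        ‖Matrix.toEuclideanLin (((List.ofFn v).map M).prod)
          ((WithLp.equiv 2 (Fin (N+1) → ℝ)).symm y)‖
          ≤ c * θ^T * ‖((List.ofFn v).map M).prod‖} with hF
    have hsub : E T ⊆ ⋃ v : Fin T → Fin m, F v := by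
      rintro y ⟨w, hlen, hw1, hw2⟩
      subst hlen
      apply Set.mem_iUnion.mpr
      refine ⟨w.get, ?_⟩
      rw [hF]
      simp only [Set.mem_setOf_eq, List.ofFn_get]
      exact ⟨hw1, hw2⟩
    have hFv : ∀ v : Fin T → Fin m, nuP (N+1) (F v)
        ≤ ENNReal.ofReal (2*(N+1)*(c*θ^T)) := by
      intro v
      by_cases h0 : (((List.ofFn v).map M).prod) = 0
      · have : F v = ∅ := by
          ext y
          simp only [hF, Set.mem_setOf_eq, h0, ne_eq, not_true_eq_false, false_and,
            Set.mem_empty_iff_false]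
        rw [this]
        simp
      · refine le_trans (measure_mono ?_) (slab_matrix _ h0 (by positivity))
        intro y hy
        simp only [hF, Set.mem_setOf_eq] at hy ⊢
        exact hy.2
    calc nuP (N+1) (E T) ≤ ∑' v : Fin T → Fin m, nuP (N+1) (F v) :=
          le_trans (measure_mono hsub) (measure_iUnion_le _)
      _ ≤ ∑' _v : Fin T → Fin m, ENNReal.ofReal (2*(N+1)*(c*θ^T)) :=
          ENNReal.tsum_le_tsum hFv
      _ = (Fintype.card (Fin T → Fin m)) * ENNReal.ofReal (2*(N+1)*(c*θ^T)) := by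
          rw [tsum_fintype]
          simp [Finset.sum_const, nsmul_eq_mul]
      _ = ENNReal.ofReal (2*(N+1)*c * ((m:ℝ)*θ)^T) := by
          rw [Fintype.card_fun]
          simp only [Fintype.card_fin]
          have hcast : ((m^T : ℕ) : ℝ≥0∞) = ENNReal.ofReal ((m:ℝ)^T) := by
            rw [← ENNReal.ofReal_natCast]
            congr 1
            push_cast
            ring
          rw [hcast]
          rw [← ENNReal.ofReal_mul (by positivity)]
          congr 1
          rw [mul_pow]
          ring
  have htend : Tendsto (fun T : ℕ => ENNReal.ofReal (2*(N+1)*c * ((m:ℝ)*θ)^T))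
      atTop (nhds 0) := by
    have h1 : Tendsto (fun T : ℕ => 2*(N+1)*c * ((m:ℝ)*θ)^T) atTop (nhds 0) := by
      have := (tendsto_pow_atTop_nhds_zero_of_lt_one (by positivity) hmθ).const_mul
        (2*((N:ℝ)+1)*c)
      simpa using this
    have := (ENNReal.continuous_ofReal.tendsto 0).comp h1
    simpa [Function.comp_def] using this
  have hBad : {y : Fin (N+1) → ℝ | ∀ᶠ T in atTop, y ∈ E T}
      ⊆ ⋃ T₀ : ℕ, ⋂ T, ⋂ (_ : T₀ ≤ T), E T := by
    intro y hy
    obtain ⟨T₀, hT₀⟩ := eventually_atTop.mp hy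
    exact Set.mem_iUnion.mpr ⟨T₀, Set.mem_iInter.mpr fun T =>
      Set.mem_iInter.mpr fun hT => hT₀ T hT⟩
  refine measure_mono_null hBad (measure_iUnion_null fun T₀ => ?_)
  have hle : nuP (N+1) (⋂ T, ⋂ (_ : T₀ ≤ T), E T) ≤ 0 := by
    apply ge_of_tendsto htend
    filter_upwards [eventually_ge_atTop T₀] with T hT
    exact le_trans (measure_mono (Set.biInter_subset_of_mem hT)) (hET T)
  exact le_antisymm hle zero_le

/-- The word realized by `σ` up to time `t`, in product order. -/
def trajWord {m : ℕ} (σ : ℕ → Fin m) (t : ℕ) : List (Fin m) :=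
  (List.range t).map (fun s => σ (t - s))

lemma trajWord_length {m : ℕ} (σ : ℕ → Fin m) (t : ℕ) : (trajWord σ t).length = t := by
  simp [trajWord]

lemma trajWord_succ {m : ℕ} (σ : ℕ → Fin m) (t : ℕ) :
    trajWord σ (t+1) = σ (t+1) :: trajWord σ t := by
  unfold trajWord
  rw [List.range_succ_eq_map]
  simp [List.map_map, Function.comp_def]

lemma toEuclideanLin_mul_apply {n : ℕ} (A B : Matrix (Fin n) (Fin n) ℝ)
    (x : EuclideanSpace ℝ (Fin n)) :
    Matrix.toEuclideanLin (A * B) x = Matrix.toEuclideanLin A (Matrix.toEuclideanLin B x) := by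
  rw [Matrix.toEuclideanLin_apply, Matrix.toEuclideanLin_apply, Matrix.toEuclideanLin_apply]
  simp [Matrix.mulVec_mulVec]

lemma trajSS_eq {n m : ℕ} (M : Fin m → Matrix (Fin n) (Fin n) ℝ) (σ : ℕ → Fin m)
    (x : EuclideanSpace ℝ (Fin n)) (t : ℕ) :
    trajSS M σ x t = Matrix.toEuclideanLin (((trajWord σ t).map M).prod) x := by
  induction t with
  | zero =>
      simp [trajSS, trajWord]
  | succ t ih =>
      rw [show trajSS M σ x (t+1) = Matrix.toEuclideanLin (M (σ (t + 1))) (trajSS M σ x t)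
        from rfl, ih, trajWord_succ]
      rw [List.map_cons, List.prod_cons, toEuclideanLin_mul_apply]

lemma exists_good {N m : ℕ} (M : Fin m → Matrix (Fin (N+1)) (Fin (N+1)) ℝ) :
    ∃ y₀ : Fin (N+1) → ℝ, ∀ c θ : ℚ, 0 ≤ (c:ℝ) → 0 ≤ (θ:ℝ) → (m:ℝ) * θ < 1 →
      ¬ (∀ᶠ T in atTop, ∃ w : List (Fin m), w.length = T ∧ (w.map M).prod ≠ 0 ∧
        ‖Matrix.toEuclideanLin ((w.map M).prod) ((WithLp.equiv 2 (Fin (N+1) → ℝ)).symm y₀)‖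
          ≤ c * θ^T * ‖(w.map M).prod‖) := by
  classical
  set Bad : ℚ × ℚ → Set (Fin (N+1) → ℝ) := fun q =>
    if (0 ≤ (q.1:ℝ) ∧ 0 ≤ (q.2:ℝ) ∧ (m:ℝ) * q.2 < 1) then
      {y | ∀ᶠ T in atTop, ∃ w : List (Fin m), w.length = T ∧ (w.map M).prod ≠ 0 ∧
        ‖Matrix.toEuclideanLin ((w.map M).prod) ((WithLp.equiv 2 (Fin (N+1) → ℝ)).symm y)‖
          ≤ q.1 * q.2^T * ‖(w.map M).prod‖}
    else ∅ with hBad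
  have hnull : nuP (N+1) (⋃ q : ℚ × ℚ, Bad q) = 0 := by
    apply measure_iUnion_null
    intro q
    simp only [hBad]
    split_ifs with h
    · exact bad_null M h.1 h.2.1 h.2.2
    · simp
  have hne : ∃ y₀ : Fin (N+1) → ℝ, y₀ ∉ ⋃ q : ℚ × ℚ, Bad q := by
    by_contra h
    push_neg at h
    have : (⋃ q : ℚ × ℚ, Bad q) = Set.univ := Set.eq_univ_of_forall h
    rw [this] at hnull
    have := measure_univ (μ := nuP (N+1))
    rw [hnull] at this
    exact one_ne_zero this.symm
  obtain ⟨y₀, hy₀⟩ := hne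
  refine ⟨y₀, fun c θ hc hθ hmθ hev => ?_⟩
  apply hy₀
  apply Set.mem_iUnion.mpr
  refine ⟨(c, θ), ?_⟩
  simp only [hBad]
  rw [if_pos (show 0 ≤ ((c,θ).1:ℝ) ∧ 0 ≤ ((c,θ).2:ℝ) ∧ (m:ℝ) * (c,θ).2 < 1 from ⟨hc, hθ, hmθ⟩)]
  exact hev

/-- The stabilizability radius is at least the joint spectral subradius divided by the
number of matrices: `ρ̌(M)/m ≤ ρ̃(M)`. -/
theorem stabRadius_ge_subradius_div_card {n m : ℕ} (hn : 2 ≤ n) (hm : 1 ≤ m)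
    (M : Fin m → Matrix (Fin n) (Fin n) ℝ) :
    subradiusSS M / m ≤ stabRadiusSS M := by
  obtain ⟨N, rfl⟩ : ∃ N, n = N + 1 := ⟨n - 1, by omega⟩
  haveI : Nonempty (Fin m) := ⟨⟨0, hm⟩⟩
  have hm0 : (0:ℝ) < m := by exact_mod_cast hm
  set f : ℕ → ℝ := fun T =>
    sInf {x : ℝ | ∃ w : List (Fin m), w.length = T ∧ x = ‖(w.map M).prod‖ ^ ((1 : ℝ) / T)}
    with hfdef
  have hf0 : ∀ T, 0 ≤ f T := by
    intro T
    apply Real.sInf_nonneg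
    rintro x ⟨w, hw, rfl⟩
    positivity
  -- the "inf set" defining the stabilizability radius
  set S : EuclideanSpace ℝ (Fin (N+1)) → Set ℝ := fun x₀ =>
    {l : ℝ | 0 ≤ l ∧ ∃ σ : ℕ → Fin m, ∃ c : ℝ, 0 < c ∧
      ∀ t : ℕ, ‖trajSS M σ x₀ t‖ ≤ c * l ^ t * ‖x₀‖} with hSdef
  set K : ℝ := Finset.univ.sup' Finset.univ_nonempty
    (fun i => ‖LinearMap.toContinuousLinearMap (Matrix.toEuclideanLin (M i))‖) with hK
  have hKle : ∀ i : Fin m, ‖LinearMap.toContinuousLinearMap (Matrix.toEuclideanLin (M i))‖ ≤ K := by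
    intro i
    rw [hK]
    exact Finset.le_sup' (fun i => ‖LinearMap.toContinuousLinearMap (Matrix.toEuclideanLin (M i))‖)
      (Finset.mem_univ i)
  have hK0 : 0 ≤ K := le_trans (norm_nonneg _) (hKle ⟨0, hm⟩)
  have hKstep : ∀ i (z : EuclideanSpace ℝ (Fin (N+1))),
      ‖Matrix.toEuclideanLin (M i) z‖ ≤ K * ‖z‖ := by
    intro i z
    have h1 : ‖Matrix.toEuclideanLin (M i) z‖
        = ‖LinearMap.toContinuousLinearMap (Matrix.toEuclideanLin (M i)) z‖ := rfl
    rw [h1]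
    exact le_trans ((LinearMap.toContinuousLinearMap (Matrix.toEuclideanLin (M i))).le_opNorm z)
      (mul_le_mul_of_nonneg_right (hKle i) (norm_nonneg z))
  have hKmem : ∀ x₀, K ∈ S x₀ := by
    intro x₀
    refine ⟨hK0, fun _ => ⟨0, hm⟩, 1, one_pos, ?_⟩
    intro t
    rw [one_mul]
    induction t with
    | zero => simp [trajSS]
    | succ t ih =>
        calc ‖trajSS M (fun _ => (⟨0, hm⟩ : Fin m)) x₀ (t+1)‖
            ≤ K * ‖trajSS M (fun _ => (⟨0, hm⟩ : Fin m)) x₀ t‖ := hKstep _ _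
          _ ≤ K * (K ^ t * ‖x₀‖) := mul_le_mul_of_nonneg_left ih hK0
          _ = K ^ (t+1) * ‖x₀‖ := by ring
  have hSbdd : ∀ x₀, BddBelow (S x₀) := fun x₀ => ⟨0, fun l hl => hl.1⟩
  -- pick a good initial point
  obtain ⟨y₀, hy₀⟩ := exists_good M
  set x₀ : EuclideanSpace ℝ (Fin (N+1)) := (WithLp.equiv 2 (Fin (N+1) → ℝ)).symm y₀ with hx₀
  -- main step : every element of S x₀ is at least ρ̌/m
  have hcore : ∀ l ∈ S x₀, subradiusSS M ≤ m * l := by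
    rintro l ⟨hl0, σ, c, hc, hbound⟩
    by_contra hcon
    push_neg at hcon
    set ρ : ℝ := subradiusSS M with hρ
    set a : ℝ := (m * l + ρ) / 2 with ha
    have hma : m * l < a := by rw [ha]; linarith
    have halim : a < ρ := by rw [ha]; linarith
    have ha0 : 0 < a := lt_of_le_of_lt (by positivity) hma
    have hbddf : Filter.IsBoundedUnder (· ≥ ·) Filter.atTop f :=
      ⟨0, Filter.eventually_map.mpr (Filter.Eventually.of_forall fun T => hf0 T)⟩
    have hev : ∀ᶠ T in atTop, a < f T := by
      have : a < Filter.atTop.liminf f := halim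
      exact Filter.eventually_lt_of_lt_liminf this hbddf
    -- rational parameters
    have hla : l / a < 1 / (m:ℝ) := by
      rw [div_lt_div_iff₀ ha0 hm0]
      linarith
    obtain ⟨θ, hθ1, hθ2⟩ := exists_rat_btwn hla
    obtain ⟨cq, hcq⟩ := exists_rat_gt (c * ‖x₀‖)
    have hx0n : (0:ℝ) ≤ c * ‖x₀‖ := by positivity
    have hcq0 : 0 ≤ (cq:ℝ) := le_of_lt (lt_of_le_of_lt hx0n hcq)
    have hθ0 : 0 ≤ (θ:ℝ) := le_of_lt (lt_of_le_of_lt (by positivity) hθ1)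
    have hmθ : (m:ℝ) * θ < 1 := by
      rw [← lt_div_iff₀' hm0]
      exact hθ2
    apply hy₀ cq θ hcq0 hθ0 hmθ
    filter_upwards [hev, eventually_ge_atTop 1] with T hT hT1
    set w : List (Fin m) := trajWord σ T with hw
    have hfw : f T ≤ ‖(w.map M).prod‖ ^ ((1:ℝ)/T) := by
      apply csInf_le
      · exact ⟨0, by rintro x ⟨u, hu, rfl⟩; positivity⟩
      · exact ⟨w, trajWord_length σ T, rfl⟩
    have haT : a ^ T < ‖(w.map M).prod‖ := by
      have h2 : a ^ T < (‖(w.map M).prod‖ ^ ((1:ℝ)/T)) ^ T :=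
        pow_lt_pow_left₀ (lt_of_lt_of_le hT hfw) (le_of_lt ha0) (by omega)
      have h3 : (‖(w.map M).prod‖ ^ ((1:ℝ)/T)) ^ T = ‖(w.map M).prod‖ := by
        rw [← Real.rpow_natCast (‖(w.map M).prod‖ ^ ((1:ℝ)/T)) T,
          ← Real.rpow_mul (norm_nonneg _)]
        rw [show (1:ℝ)/T * T = 1 by
          field_simp]
        exact Real.rpow_one _
      rwa [h3] at h2
    refine ⟨w, trajWord_length σ T, ?_, ?_⟩
    · -- the product is nonzero
      intro h0
      rw [h0] at haT
      simp at haT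
      nlinarith [pow_pos ha0 T]
    · -- the smallness estimate
      have htraj : ‖Matrix.toEuclideanLin ((w.map M).prod) x₀‖ ≤ c * l ^ T * ‖x₀‖ := by
        rw [← trajSS_eq]
        exact hbound T
      have hla2 : l ≤ (θ:ℝ) * a := le_of_lt ((div_lt_iff₀ ha0).mp hθ1)
      calc ‖Matrix.toEuclideanLin ((w.map M).prod)
            ((WithLp.equiv 2 (Fin (N+1) → ℝ)).symm y₀)‖
          ≤ c * l ^ T * ‖x₀‖ := htraj
        _ = (c * ‖x₀‖) * l ^ T := by ring
        _ ≤ (cq:ℝ) * ((θ:ℝ) * a) ^ T :=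
            mul_le_mul (le_of_lt hcq) (pow_le_pow_left₀ hl0 hla2 T)
              (pow_nonneg hl0 T) hcq0
        _ = (cq:ℝ) * ((θ:ℝ)^T * a^T) := by rw [mul_pow]
        _ ≤ (cq:ℝ) * ((θ:ℝ)^T * ‖(w.map M).prod‖) := by
            apply mul_le_mul_of_nonneg_left _ hcq0
            exact mul_le_mul_of_nonneg_left (le_of_lt haT) (pow_nonneg hθ0 T)
        _ = (cq:ℝ) * (θ:ℝ)^T * ‖(w.map M).prod‖ := by ring
  -- assemble
  show subradiusSS M / m ≤ ⨆ x : EuclideanSpace ℝ (Fin (N+1)), sInf (S x)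
  have hbdd : BddAbove (Set.range (fun x : EuclideanSpace ℝ (Fin (N+1)) => sInf (S x))) := by
    refine ⟨K, ?_⟩
    rintro _ ⟨x, rfl⟩
    exact csInf_le (hSbdd x) (hKmem x)
  calc subradiusSS M / m ≤ sInf (S x₀) := by
        apply le_csInf ⟨K, hKmem x₀⟩
        intro l hl
        rw [div_le_iff₀ hm0]
        calc subradiusSS M ≤ m * l := hcore l hl
          _ = l * m := mul_comm _ _
    _ ≤ ⨆ x : EuclideanSpace ℝ (Fin (N+1)), sInf (S x) :=
        le_ciSup hbdd x₀
end

section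
/- Let M₁ = [[2,0],[0,0]] and let R(α) = inf_{l∈ℕ} ‖lα − 1/2‖_N, where ‖x‖_N denotes the distance from x to the nearest integer. For every α ∈ (0,1) there exists l ∈ ℕ with ‖lα − 1/2‖_N ≤ 1/6, with equality attainable as infimum only when α = 1/3 or α = 2/3. -/
/-- Distance from a real number to the nearest integer. -/
noncomputable def distNearestInt (x : ℝ) : ℝ := ⨅ k : ℤ, |x - (k : ℝ)|

lemma dnni_bdd (x : ℝ) : BddBelow (Set.range fun k : ℤ => |x - (k : ℝ)|) :=
  ⟨0, by rintro y ⟨k, rfl⟩; positivity⟩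

lemma dnni_nonneg (x : ℝ) : 0 ≤ distNearestInt x :=
  le_ciInf fun _ => abs_nonneg _

lemma dnni_le (x : ℝ) (k : ℤ) : distNearestInt x ≤ |x - (k : ℝ)| :=
  ciInf_le (dnni_bdd x) k

lemma dnni_eq (x : ℝ) : distNearestInt x = |x - (round x : ℝ)| :=
  le_antisymm (dnni_le x _) (le_ciInf fun k => round_le x k)

lemma dnni_neg (x : ℝ) : distNearestInt (-x) = distNearestInt x := by
  have h : ∀ y : ℝ, distNearestInt (-y) ≤ distNearestInt y := by
    intro y
    calc distNearestInt (-y) ≤ |(-y) - ((-(round y) : ℤ) : ℝ)| := dnni_le _ _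
    _ = |y - (round y : ℝ)| := by push_cast; rw [← abs_neg]; ring_nf
    _ = distNearestInt y := (dnni_eq y).symm
  have := h (-x); rw [neg_neg] at this
  exact le_antisymm (h x) this

lemma dnni_add_int (x : ℝ) (n : ℤ) : distNearestInt (x + n) = distNearestInt x := by
  have h : ∀ y : ℝ, ∀ m : ℤ, distNearestInt (y + m) ≤ distNearestInt y := by
    intro y m
    calc distNearestInt (y + m) ≤ |(y + m) - ((round y + m : ℤ) : ℝ)| := dnni_le _ _
    _ = |y - (round y : ℝ)| := by push_cast; ring_nf
    _ = distNearestInt y := (dnni_eq y).symm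
  have h2 := h (x + n) (-n)
  push_cast at h2
  rw [add_neg_cancel_right] at h2
  exact le_antisymm (h x n) h2

/-- For β ∈ (0, 1/3], some multiple lands in [1/3, 1/3 + β). -/
lemma aux_exists (β : ℝ) (h0 : 0 < β) :
    ∃ l : ℕ, (1/3 : ℝ) ≤ l * β ∧ (l : ℝ) * β < 1/3 + β := by
  refine ⟨⌈1 / (3 * β)⌉₊, ?_, ?_⟩
  · have h1 : 1 / (3 * β) ≤ (⌈1 / (3 * β)⌉₊ : ℝ) := Nat.le_ceil _
    calc (1/3 : ℝ) = (1 / (3 * β)) * β := by field_simp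
    _ ≤ (⌈1 / (3 * β)⌉₊ : ℝ) * β := by nlinarith
  · have h1 : (⌈1 / (3 * β)⌉₊ : ℝ) < 1 / (3 * β) + 1 :=
      Nat.ceil_lt_add_one (by positivity)
    calc (⌈1 / (3 * β)⌉₊ : ℝ) * β < (1 / (3 * β) + 1) * β := by nlinarith
    _ = 1/3 + β := by field_simp

lemma aux_third (β : ℝ) (h0 : 0 < β) (h3 : β ≤ 1/3)
    (hall : ∀ l : ℕ, (1/6 : ℝ) ≤ distNearestInt (l * β - 1/2)) : β = 1/3 := by
  obtain ⟨l, hl1, hl2⟩ := aux_exists β h0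
  -- l*β ∈ [1/3, 1/3+β) ⊆ [1/3, 2/3), and not in (1/3, 2/3), so l*β = 1/3
  have hnot : ∀ m : ℕ, ¬ ((1/3 : ℝ) < m * β ∧ (m : ℝ) * β < 2/3) := by
    intro m ⟨ha, hb⟩
    have := hall m
    have hle := dnni_le ((m : ℝ) * β - 1/2) 0
    push_cast at hle
    have : |(m : ℝ) * β - 1/2 - 0| < 1/6 := by rw [abs_lt]; constructor <;> linarith
    linarith
  have heq : (l : ℝ) * β = 1/3 := by
    by_contra hne
    exact hnot l ⟨lt_of_le_of_ne hl1 (Ne.symm hne), by linarith⟩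
  have hl0 : l ≠ 0 := by
    rintro rfl; norm_num at heq
  -- β = 1/(3l); if l ≥ 2, then (l+1)β ∈ (1/3, 2/3): contradiction
  rcases Nat.lt_or_ge l 2 with h | h
  · interval_cases l
    · simp at hl0
    · simpa using heq
  · exfalso
    have hβ6 : β ≤ 1/6 := by
      have : (2 : ℝ) ≤ l := by exact_mod_cast h
      nlinarith
    refine hnot (l + 1) ⟨?_, ?_⟩
    · push_cast; nlinarith
    · push_cast; nlinarith

lemma dnni_flip (α : ℝ) (l : ℕ) :
    distNearestInt ((l : ℝ) * (1 - α) - 1/2) = distNearestInt ((l : ℝ) * α - 1/2) := by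
  have h1 : (l : ℝ) * (1 - α) - 1/2 = -((l : ℝ) * α - 1/2) + ((l : ℤ) - 1 : ℤ) := by
    push_cast; ring
  rw [h1, dnni_add_int, dnni_neg]

/-- For every `α ∈ (0,1)` there is `l ∈ ℕ` with `‖lα − 1/2‖_N ≤ 1/6`, and the infimum
`inf_l ‖lα − 1/2‖_N` equals `1/6` only when `α = 1/3` or `α = 2/3`. -/
theorem dist_half_le_sixth (α : ℝ) (hα : α ∈ Set.Ioo (0 : ℝ) 1) :
    (∃ l : ℕ, distNearestInt (l * α - 1 / 2) ≤ 1 / 6) ∧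
      ((⨅ l : ℕ, distNearestInt (l * α - 1 / 2)) = 1 / 6 → α = 1 / 3 ∨ α = 2 / 3) := by
  obtain ⟨h0, h1⟩ := hα
  have key : ∀ x : ℝ, 1/3 ≤ x → x ≤ 2/3 → distNearestInt (x - 1/2) ≤ 1/6 := by
    intro x ha hb
    have := dnni_le (x - 1/2) 0
    push_cast at this
    calc distNearestInt (x - 1/2) ≤ |x - 1/2 - 0| := this
    _ ≤ 1/6 := by rw [abs_le]; constructor <;> linarith
  constructor
  · -- existence
    rcases le_or_gt α (1/3) with hc | hc
    · obtain ⟨l, hl1, hl2⟩ := aux_exists α h0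
      exact ⟨l, key _ hl1 (by linarith)⟩
    rcases le_or_gt α (2/3) with hc2 | hc2
    · exact ⟨1, by simpa using key α (by linarith) hc2⟩
    · obtain ⟨l, hl1, hl2⟩ := aux_exists (1 - α) (by linarith)
      refine ⟨l, ?_⟩
      rw [← dnni_flip]
      exact key _ hl1 (by linarith)
  · intro hinf
    have hall : ∀ l : ℕ, (1/6 : ℝ) ≤ distNearestInt (l * α - 1/2) := by
      intro l
      rw [← hinf]
      exact ciInf_le ⟨0, by rintro y ⟨k, rfl⟩; exact dnni_nonneg _⟩ l
    -- α ∉ (1/3, 2/3)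
    rcases le_or_gt α (1/3) with hc | hc
    · exact Or.inl (aux_third α h0 hc hall)
    · right
      have hc2 : 2/3 ≤ α := by
        by_contra hc2
        push_neg at hc2
        have h6 := hall 1
        have hle := dnni_le ((1:ℕ) * α - 1/2) 0
        have : |(1:ℝ) * α - 1/2 - 0| < 1/6 := by
          rw [abs_lt]; constructor <;> linarith
        linarith
      have : 1 - α = 1/3 := by
        refine aux_third (1 - α) (by linarith) (by linarith) ?_
        intro l; rw [dnni_flip]; exact hall l
      linarith
end

section
/- Fix β ∈ (0,1) and c₁ ∈ (0,1). The set L of all α ∈ (0,1) such that there exist infinitely many l ∈ ℕ with ‖lα − β‖_N < c₁ˡ has Hausdorff dimension zero. -/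
open MeasureTheory Set Filter EMetric
open scoped ENNReal NNReal Topology

/-- The set of `α ∈ (0,1)` admitting infinitely many `l` with `‖lα − β‖_N < c₁ˡ` has
Hausdorff dimension zero. -/
theorem dimH_exp_approx_set_eq_zero (β : ℝ) (hβ : β ∈ Set.Ioo (0 : ℝ) 1)
    (c₁ : ℝ) (hc₁ : c₁ ∈ Set.Ioo (0 : ℝ) 1) :
    dimH {α : ℝ | α ∈ Set.Ioo (0 : ℝ) 1 ∧
      {l : ℕ | distNearestInt (l * α - β) < c₁ ^ l}.Infinite} = 0 := by
  obtain ⟨hb0, hb1⟩ := hβ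
  obtain ⟨hc0, hc1⟩ := hc₁
  set L := {α : ℝ | α ∈ Set.Ioo (0 : ℝ) 1 ∧
      {l : ℕ | distNearestInt (l * α - β) < c₁ ^ l}.Infinite} with hLdef
  have key : ∀ d : ℝ≥0, 0 < d → μH[(d : ℝ)] L = 0 := by
    intro d hd
    set d' : ℝ := (d : ℝ) with hd'def
    have hd' : 0 < d' := by exact_mod_cast hd
    -- the comparison series
    set rr : ℝ := c₁ ^ d' with hrrdef
    have hrr0 : 0 < rr := Real.rpow_pos_of_pos hc0 _
    have hrr1 : rr < 1 := Real.rpow_lt_one hc0.le hc1 hd'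
    set a : ℕ → ℝ := fun l => ((l : ℝ) + 2) * (2 * c₁ ^ l) ^ d' with hadef
    have ha_eq : ∀ l : ℕ, a l = (2 : ℝ) ^ d' * ((l : ℝ) * rr ^ l) + (2 : ℝ) ^ d' * 2 * rr ^ l := by
      intro l
      have h1 : (2 * c₁ ^ l) ^ d' = (2 : ℝ) ^ d' * (c₁ ^ l) ^ d' :=
        Real.mul_rpow (by norm_num) (pow_nonneg hc0.le l)
      have h2 : (c₁ ^ l) ^ d' = rr ^ l := by
        rw [hrrdef, ← Real.rpow_natCast c₁ l, ← Real.rpow_natCast (c₁ ^ d') l,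
          ← Real.rpow_mul hc0.le, ← Real.rpow_mul hc0.le, mul_comm]
      rw [hadef]; simp only []
      rw [h1, h2]; ring
    have hsum : Summable a := by
      have h1 : Summable fun l : ℕ => (l : ℝ) ^ 1 * rr ^ l :=
        summable_pow_mul_geometric_of_norm_lt_one 1 (by rwa [Real.norm_eq_abs, abs_of_pos hrr0])
      have h1' : Summable fun l : ℕ => (l : ℝ) * rr ^ l := by simpa using h1
      have h2 : Summable fun l : ℕ => rr ^ l := summable_geometric_of_lt_one hrr0.le hrr1
      have := ((h1'.mul_left ((2 : ℝ) ^ d')).add (h2.mul_left ((2 : ℝ) ^ d' * 2)))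
      exact this.congr fun l => (ha_eq l).symm
    set g : ℕ → ℝ≥0∞ := fun l => ((l : ℝ≥0∞) + 2) * ENNReal.ofReal ((2 * c₁ ^ l) ^ d')
      with hgdef
    have hg_ofReal : ∀ l, g l = ENNReal.ofReal (a l) := by
      intro l
      rw [hgdef, hadef]; simp only []
      rw [ENNReal.ofReal_mul (by positivity)]
      congr 1
      rw [ENNReal.ofReal_add (by positivity) (by norm_num)]
      simp
    have hGfin : ∑' l, g l ≠ ⊤ := by
      have : ∑' l, g l = ENNReal.ofReal (∑' l, a l) := by
        rw [ENNReal.ofReal_tsum_of_nonneg (fun l => by positivity) hsum]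
        exact tsum_congr hg_ofReal
      rw [this]; exact ENNReal.ofReal_ne_top
    have htail : Tendsto (fun N : ℕ => ∑' j : ℕ, g (j + N + 1)) atTop (𝓝 0) := by
      have h0 := (ENNReal.tendsto_sum_nat_add g hGfin).comp (tendsto_add_atTop_nat 1)
      have : (fun N : ℕ => ∑' j : ℕ, g (j + N + 1))
          = (fun i : ℕ => ∑' j : ℕ, g (j + i)) ∘ (fun N => N + 1) := by
        funext N; simp only [Function.comp_apply]
        exact tsum_congr fun j => by rw [← add_assoc]
      rw [this]; exact h0
    -- the covering
    set t : ∀ _ : ℕ, ℕ × ℤ → Set ℝ := fun N p =>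
      if p.2 ∈ Finset.Icc (-1 : ℤ) ((p.1 + N + 1 : ℕ) : ℤ) then
        Metric.ball (((p.2 : ℝ) + β) / ((p.1 + N + 1 : ℕ) : ℝ)) (c₁ ^ (p.1 + N + 1))
      else ∅ with htdef
    set r : ℕ → ℝ≥0∞ := fun N => ENNReal.ofReal (2 * c₁ ^ (N + 1)) with hrdef
    have hr : Tendsto r atTop (𝓝 0) := by
      have h1 : Tendsto (fun N : ℕ => 2 * c₁ ^ (N + 1)) atTop (𝓝 (2 * 0)) := by
        exact ((tendsto_pow_atTop_nhds_zero_of_lt_one hc0.le hc1).comp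
          (tendsto_add_atTop_nat 1)).const_mul 2
      rw [mul_zero] at h1
      have := (ENNReal.continuous_ofReal.tendsto 0).comp h1
      rw [ENNReal.ofReal_zero] at this
      exact this
    have ht : ∀ N : ℕ, ∀ i : ℕ × ℤ, diam (t N i) ≤ r N := by
      intro N ⟨j, k⟩
      rw [htdef]; simp only []
      split_ifs with hk
      · calc diam (Metric.ball (((k : ℝ) + β) / ((j + N + 1 : ℕ) : ℝ)) (c₁ ^ (j + N + 1)))
            ≤ 2 * ENNReal.ofReal (c₁ ^ (j + N + 1)) := by
              rw [← Metric.emetric_ball]; exact diam_ball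
          _ ≤ r N := by
              show _ ≤ ENNReal.ofReal (2 * c₁ ^ (N + 1))
              rw [ENNReal.ofReal_mul (by norm_num)]
              have h2 : (ENNReal.ofReal 2) = (2 : ℝ≥0∞) := by
                simp [ENNReal.ofReal_ofNat]
              rw [h2]
              exact mul_le_mul_right
                (ENNReal.ofReal_le_ofReal (pow_le_pow_of_le_one hc0.le hc1.le (by omega))) 2
      · simp [EMetric.diam]
    have hst : ∀ N : ℕ, L ⊆ ⋃ i : ℕ × ℤ, t N i := by
      intro N α hα
      obtain ⟨⟨hα0, hα1⟩, hinf⟩ := hα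
      obtain ⟨l, hlmem, hlgt⟩ := hinf.exists_gt N
      have hl1 : 1 ≤ l := by omega
      have hlR : (1 : ℝ) ≤ (l : ℝ) := by exact_mod_cast hl1
      have hmem : distNearestInt ((l : ℝ) * α - β) < c₁ ^ l := hlmem
      rw [distNearestInt] at hmem
      obtain ⟨k, hk⟩ := exists_lt_of_ciInf_lt hmem
      have hcl1 : c₁ ^ l ≤ 1 := pow_le_one₀ hc0.le hc1.le
      have hub : (k : ℝ) < (l : ℝ) + 1 := by
        have h1 : (l : ℝ) * α - β - (k : ℝ) > -(c₁ ^ l) := by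
          have := abs_lt.1 hk; linarith [this.1]
        have h2 : (l : ℝ) * α ≤ (l : ℝ) := by
          nlinarith
        nlinarith
      have hlb : (-2 : ℝ) < (k : ℝ) := by
        have h1 : (l : ℝ) * α - β - (k : ℝ) < c₁ ^ l := (abs_lt.1 hk).2
        have h2 : (0 : ℝ) ≤ (l : ℝ) * α := by positivity
        nlinarith
      have hkub : k ≤ (l : ℤ) := by
        have : (k : ℝ) < ((l : ℤ) : ℝ) + 1 := by exact_mod_cast hub
        have := Int.lt_add_one_iff.mp (by exact_mod_cast this : k < (l : ℤ) + 1)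
        exact this
      have hklb : (-1 : ℤ) ≤ k := by
        have : ((-2 : ℤ) : ℝ) < (k : ℝ) := by exact_mod_cast hlb
        have h := (Int.lt_iff_add_one_le).mp (by exact_mod_cast this : (-2 : ℤ) < k)
        linarith
      refine Set.mem_iUnion.2 ⟨(l - (N + 1), k), ?_⟩
      have hlj : l - (N + 1) + N + 1 = l := by omega
      rw [htdef]; simp only [hlj]
      rw [if_pos (Finset.mem_Icc.2 ⟨hklb, hkub⟩)]
      rw [Metric.mem_ball, Real.dist_eq]
      have hlne : (l : ℝ) ≠ 0 := by positivity
      have heq : α - ((k : ℝ) + β) / (l : ℝ) = ((l : ℝ) * α - β - (k : ℝ)) / (l : ℝ) := by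
        field_simp; ring
      rw [heq, abs_div, abs_of_pos (by positivity : (0 : ℝ) < (l : ℝ))]
      calc |(l : ℝ) * α - β - (k : ℝ)| / (l : ℝ) ≤ |(l : ℝ) * α - β - (k : ℝ)| :=
            div_le_self (abs_nonneg _) hlR
        _ < c₁ ^ l := hk
    have hμle : μH[d'] L ≤ atTop.liminf fun N => ∑' i : ℕ × ℤ, diam (t N i) ^ d' :=
      Measure.hausdorffMeasure_le_liminf_tsum d' L r hr t
        (Eventually.of_forall ht) (Eventually.of_forall hst)
    have hsum_le : ∀ N : ℕ, (∑' i : ℕ × ℤ, diam (t N i) ^ d') ≤ ∑' j : ℕ, g (j + N + 1) := by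
      intro N
      rw [ENNReal.tsum_prod']
      refine ENNReal.tsum_le_tsum fun j => ?_
      have hzero : ∀ k ∉ Finset.Icc (-1 : ℤ) ((j + N + 1 : ℕ) : ℤ),
          diam (t N (j, k)) ^ d' = 0 := by
        intro k hk
        rw [htdef]; simp only []
        rw [if_neg hk]
        simp [EMetric.diam, ENNReal.zero_rpow_of_pos hd']
      rw [tsum_eq_sum hzero]
      have hterm : ∀ k ∈ Finset.Icc (-1 : ℤ) ((j + N + 1 : ℕ) : ℤ),
          diam (t N (j, k)) ^ d' ≤ ENNReal.ofReal ((2 * c₁ ^ (j + N + 1)) ^ d') := by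
        intro k hk
        rw [htdef]; simp only []
        rw [if_pos hk]
        have hdiam : diam (Metric.ball (((k : ℝ) + β) / ((j + N + 1 : ℕ) : ℝ))
            (c₁ ^ (j + N + 1))) ≤ ENNReal.ofReal (2 * c₁ ^ (j + N + 1)) := by
          rw [← Metric.emetric_ball]
          refine diam_ball.trans ?_
          rw [ENNReal.ofReal_mul (by norm_num)]
          gcongr
          simp [ENNReal.ofReal_ofNat]
        calc diam (Metric.ball (((k : ℝ) + β) / ((j + N + 1 : ℕ) : ℝ)) (c₁ ^ (j + N + 1))) ^ d'
            ≤ (ENNReal.ofReal (2 * c₁ ^ (j + N + 1))) ^ d' :=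
              ENNReal.rpow_le_rpow hdiam hd'.le
          _ = ENNReal.ofReal ((2 * c₁ ^ (j + N + 1)) ^ d') :=
              ENNReal.ofReal_rpow_of_pos (by positivity)
      calc (∑ k ∈ Finset.Icc (-1 : ℤ) ((j + N + 1 : ℕ) : ℤ), diam (t N (j, k)) ^ d')
          ≤ ∑ _k ∈ Finset.Icc (-1 : ℤ) ((j + N + 1 : ℕ) : ℤ),
              ENNReal.ofReal ((2 * c₁ ^ (j + N + 1)) ^ d') := Finset.sum_le_sum hterm
        _ = ((j + N + 1 + 2 : ℕ) : ℝ≥0∞) * ENNReal.ofReal ((2 * c₁ ^ (j + N + 1)) ^ d') := by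
            have hcard : (Finset.Icc (-1 : ℤ) ((j + N + 1 : ℕ) : ℤ)).card = j + N + 1 + 2 := by
              rw [Int.card_Icc]; omega
            rw [Finset.sum_const, hcard, nsmul_eq_mul]
        _ ≤ g (j + N + 1) := by
            rw [hgdef]; simp only []
            gcongr
            push_cast
            ring_nf
            exact le_refl _
    have hliminf : (atTop.liminf fun N => ∑' i : ℕ × ℤ, diam (t N i) ^ d') ≤ 0 := by
      calc (atTop.liminf fun N => ∑' i : ℕ × ℤ, diam (t N i) ^ d')
          ≤ atTop.liminf fun N => ∑' j : ℕ, g (j + N + 1) :=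
            liminf_le_liminf (Eventually.of_forall hsum_le)
        _ = 0 := htail.liminf_eq
    exact le_antisymm (hμle.trans hliminf) (zero_le)
  refine le_antisymm (dimH_le fun d hμ => ?_) (zero_le)
  by_contra hne
  have hd : 0 < d := by
    rcases eq_or_lt_of_le (show 0 ≤ d from zero_le) with h | h
    · exact absurd (by simp [← h]) hne
    · exact h
  rw [key d hd] at hμ
  exact ENNReal.zero_ne_top hμ
end
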